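/- Let A : S_n(ℝ) → ℝ^m be linear, b ∈ ℝ^m, E_SDP = { X ∈ S_n(ℝ) : A(X) = b, X ⪰ 0 } nonempty and compact, and M_p = { V ∈ ℝ^{n×p} : A(VV^T) = b }. Let C ∈ S_n(ℝ) be any cost matrix, and let V_* ∈ M_p with rank(V_*) < p. If there exists g ∈ ℝ^m such that (C − A^*(g))·V_* = 0 and ⟨C − A^*(g), V̇V̇^T⟩ ≥ 0 for all V̇ ∈ ℝ^{n×p} with A(V̇V_*^T + V_*V̇^T) = 0, then V_* is a global minimizer of f_C(V) = Tr(C·VV^T) over M_p (equivalently, X = V_*V_*^T minimizes Tr(CX) over E_SDP). -/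

import Mathlib

open Matrix


lemma aux_trace_transpose_mul_self_nonneg {n p : ℕ} (M : Matrix (Fin n) (Fin p) ℝ) :
    0 ≤ Matrix.trace (Mᵀ * M) := by
  rw [Matrix.trace]
  refine Finset.sum_nonneg fun j _ => ?_
  simp only [Matrix.diag_apply, Matrix.mul_apply, Matrix.transpose_apply]
  exact Finset.sum_nonneg fun i _ => mul_self_nonneg _

lemma aux_psd_eq_conjTranspose_mul_self {n : ℕ} {S : Matrix (Fin n) (Fin n) ℝ}
    (hS : S.PosSemidef) : ∃ B : Matrix (Fin n) (Fin n) ℝ, S = Bᴴ * B := by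
  open scoped MatrixOrder in
  refine ⟨CFC.sqrt S, ?_⟩
  open scoped MatrixOrder in
  have h1 : (CFC.sqrt S)ᴴ = CFC.sqrt S := (CFC.sqrt_nonneg S).isSelfAdjoint.star_eq
  open scoped MatrixOrder in
  rw [h1, CFC.sqrt_mul_sqrt_self S hS.nonneg]

lemma aux_trace_psd_mul_nonneg {n : ℕ} {S X : Matrix (Fin n) (Fin n) ℝ}
    (hS : S.PosSemidef) (hX : X.PosSemidef) : 0 ≤ Matrix.trace (S * X) := by
  obtain ⟨B, hB⟩ := aux_psd_eq_conjTranspose_mul_self hS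
  obtain ⟨D, hD⟩ := aux_psd_eq_conjTranspose_mul_self hX
  rw [hB, hD, Matrix.conjTranspose_eq_transpose_of_trivial,
    Matrix.conjTranspose_eq_transpose_of_trivial, Matrix.mul_assoc, Matrix.trace_mul_comm]
  have key : B * (Dᵀ * D) * Bᵀ = (D * Bᵀ)ᵀ * (D * Bᵀ) := by
    simp [Matrix.transpose_mul, Matrix.mul_assoc]
  rw [key]
  exact aux_trace_transpose_mul_self_nonneg _

/-- a rank-deficient second-order critical point of the
factorized problem `f_C(V) = Tr(C V Vᵀ)` on `M_p` is a global minimizer of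
`f_C` over `M_p`, and `V_* V_*ᵀ` moreover minimizes `Tr(C X)` over
`E_SDP = {X : 𝒜 X = b, X ⪰ 0}`. -/
theorem rank_deficient_second_order_points_are_optimal
    (n m p : ℕ)
    (𝒜 : Matrix (Fin n) (Fin n) ℝ →ₗ[ℝ] (Fin m → ℝ)) (b : Fin m → ℝ)
    (𝒜ad : (Fin m → ℝ) →ₗ[ℝ] Matrix (Fin n) (Fin n) ℝ)
    (had_symm : ∀ g, (𝒜ad g).IsSymm)
    (hadj : ∀ (X : Matrix (Fin n) (Fin n) ℝ) (g : Fin m → ℝ), X.IsSymm →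
      ∑ i, 𝒜 X i * g i = Matrix.trace (𝒜ad g * X))
    (hne : ∃ X : Matrix (Fin n) (Fin n) ℝ, 𝒜 X = b ∧ X.PosSemidef)
    (hcpt : IsCompact {X : Matrix (Fin n) (Fin n) ℝ | 𝒜 X = b ∧ X.PosSemidef})
    (hsubmersion : ∀ V : Matrix (Fin n) (Fin p) ℝ, 𝒜 (V * Vᵀ) = b →
      Function.Surjective fun Vd : Matrix (Fin n) (Fin p) ℝ => 𝒜 (Vd * Vᵀ + V * Vdᵀ))
    (C : Matrix (Fin n) (Fin n) ℝ) (hC : C.IsSymm)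
    (Vs : Matrix (Fin n) (Fin p) ℝ) (hVs : 𝒜 (Vs * Vsᵀ) = b)
    (hrank : Vs.rank < p)
    (hcrit : ∃ g : Fin m → ℝ,
      (C - 𝒜ad g) * Vs = 0 ∧
      ∀ Vd : Matrix (Fin n) (Fin p) ℝ, 𝒜 (Vd * Vsᵀ + Vs * Vdᵀ) = 0 →
        0 ≤ Matrix.trace ((C - 𝒜ad g) * (Vd * Vdᵀ))) :
    (∀ V' : Matrix (Fin n) (Fin p) ℝ, 𝒜 (V' * V'ᵀ) = b →
      Matrix.trace (C * (Vs * Vsᵀ)) ≤ Matrix.trace (C * (V' * V'ᵀ))) ∧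
    (∀ X : Matrix (Fin n) (Fin n) ℝ, 𝒜 X = b → X.PosSemidef →
      Matrix.trace (C * (Vs * Vsᵀ)) ≤ Matrix.trace (C * X)) := by
  obtain ⟨g, hg1, hg2⟩ := hcrit
  set S := C - 𝒜ad g with hSdef
  have hSsymm : S.IsSymm := hC.sub (had_symm g)
  -- a nonzero kernel vector
  obtain ⟨z, hz0, hz⟩ : ∃ z : Fin p → ℝ, z ≠ 0 ∧ Vs.mulVec z = 0 := by
    have h := LinearMap.finrank_range_add_finrank_ker Vs.mulVecLin
    rw [Module.finrank_pi] at h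
    simp only [Fintype.card_fin] at h
    have hker : LinearMap.ker Vs.mulVecLin ≠ ⊥ := by
      intro hbot
      rw [hbot, finrank_bot] at h
      rw [show Vs.rank = Module.finrank ℝ (LinearMap.range Vs.mulVecLin) from rfl] at hrank
      omega
    obtain ⟨z, hzk, hz0⟩ := Submodule.ne_bot_iff _ |>.mp hker
    exact ⟨z, hz0, hzk⟩
  have hzz : 0 < ∑ j, z j * z j := by
    rcases Function.ne_iff.mp hz0 with ⟨j0, hj0⟩
    refine Finset.sum_pos' (fun j _ => mul_self_nonneg _)
      ⟨j0, Finset.mem_univ _, mul_self_pos.mpr (by simpa using hj0)⟩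
  -- S is positive semidefinite
  have hSpsd : S.PosSemidef := by
    refine Matrix.PosSemidef.of_dotProduct_mulVec_nonneg ?_ ?_
    · rwa [Matrix.IsHermitian, Matrix.conjTranspose_eq_transpose_of_trivial]
    · intro u
      set Vd : Matrix (Fin n) (Fin p) ℝ := Matrix.of fun i j => u i * z j with hVd
      have h1 : Vd * Vsᵀ = 0 := by
        ext i k
        simp only [Matrix.mul_apply, Matrix.transpose_apply, hVd, Matrix.of_apply,
          Matrix.zero_apply]
        have : ∑ j, u i * z j * Vs k j = u i * Vs.mulVec z k := by
          rw [Matrix.mulVec, dotProduct, Finset.mul_sum]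
          exact Finset.sum_congr rfl fun j _ => by ring
        rw [this, hz]
        simp
      have h2 : Vs * Vdᵀ = 0 := by
        have := congrArg Matrix.transpose h1
        rwa [Matrix.transpose_mul, Matrix.transpose_transpose, Matrix.transpose_zero] at this
      have hkey := hg2 Vd (by rw [h1, h2, add_zero, map_zero])
      have hprod : Vd * Vdᵀ = (∑ j, z j * z j) • Matrix.of fun i k => u i * u k := by
        ext i k
        simp only [Matrix.mul_apply, Matrix.transpose_apply, hVd, Matrix.of_apply,
          Matrix.smul_apply, smul_eq_mul]
        rw [Finset.sum_congr rfl
          (fun j _ => show u i * z j * (u k * z j) = z j * z j * (u i * u k) by ring),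
          ← Finset.sum_mul]
      rw [hprod, Matrix.mul_smul, Matrix.trace_smul, smul_eq_mul] at hkey
      have htr : Matrix.trace (S * Matrix.of fun i k => u i * u k)
          = dotProduct (star u) (S.mulVec u) := by
        simp only [star_trivial, Matrix.trace, Matrix.diag_apply, Matrix.mul_apply,
          Matrix.of_apply, dotProduct, Matrix.mulVec, Finset.mul_sum]
        refine Finset.sum_congr rfl fun i _ => Finset.sum_congr rfl fun k _ => by ring
      rw [htr] at hkey
      exact (mul_nonneg_iff_of_pos_left hzz).mp hkey
  -- the SDP part
  have hsdp : ∀ X : Matrix (Fin n) (Fin n) ℝ, 𝒜 X = b → X.PosSemidef →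
      Matrix.trace (C * (Vs * Vsᵀ)) ≤ Matrix.trace (C * X) := by
    intro X hXb hXpsd
    have hXsymm : X.IsSymm := by
      have := hXpsd.1
      rwa [Matrix.IsHermitian, Matrix.conjTranspose_eq_transpose_of_trivial] at this
    have hVVsymm : (Vs * Vsᵀ).IsSymm := by
      rw [Matrix.IsSymm, Matrix.transpose_mul, Matrix.transpose_transpose]
    -- trace of 𝒜ad g against X and Vs*Vsᵀ agree
    have hadX := hadj X g hXsymm
    have hadV := hadj (Vs * Vsᵀ) g hVVsymm
    rw [hXb] at hadX
    rw [hVs] at hadV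
    have had_eq : Matrix.trace (𝒜ad g * X) = Matrix.trace (𝒜ad g * (Vs * Vsᵀ)) := by
      rw [← hadX, ← hadV]
    -- trace (S * Vs Vsᵀ) = 0
    have hSVV : Matrix.trace (S * (Vs * Vsᵀ)) = 0 := by
      rw [← Matrix.mul_assoc, hg1, Matrix.zero_mul, Matrix.trace_zero]
    have hSX : 0 ≤ Matrix.trace (S * X) :=
      aux_trace_psd_mul_nonneg hSpsd hXpsd
    have expand : ∀ Y : Matrix (Fin n) (Fin n) ℝ,
        Matrix.trace (C * Y) = Matrix.trace (S * Y) + Matrix.trace (𝒜ad g * Y) := by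
      intro Y
      rw [hSdef, Matrix.sub_mul, Matrix.trace_sub]
      ring
    rw [expand X, expand (Vs * Vsᵀ), hSVV, had_eq]
    linarith
  refine ⟨fun V' hV' => ?_, hsdp⟩
  exact hsdp (V' * V'ᵀ) hV' (Matrix.posSemidef_self_mul_conjTranspose V')
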